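/- Let A ∈ ℚ^{m×n}, b ∈ ℚ^m and k ∈ {1,…,m}. Set (A^{(0)}, b^{(0)}) = (A, b), and for each l ∈ {1,…,k} let A^{(l)} x ≤ b^{(l)} be a restricted projection of A^{(l−1)} x ≤ b^{(l−1)} with respect to the variable x_l (either fmpproj with respect to some designated row i ∈ I⁻_l(A^{(l−1)}) ∪ I⁺_l(A^{(l−1)}) when both index sets are nonempty, or the degenerate restricted projection fmpproj(·,·,l,⊥) otherwise), and let F^{(l)} denote the corresponding projection matrix. Then the product F = F^{(k)} · … · F^{(1)} has linearly independent rows. -/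

import Mathlib

/-- The `k`-th standard unit row vector. -/
def unitRow {ι : Type*} [DecidableEq ι] (k : ι) : ι → ℚ :=
  fun l => if l = k then 1 else 0

/-- The projection matrix of the restricted projection `fmpproj` of `x_j` with respect
to a designated row `i`: its rows, indexed by `i' ≠ i`, are
`(1/A_{i,j})·e_i − (1/A_{i',j})·e_{i'}` for `i' ∈ I⁻_j(A)\{i}`,
`−(1/A_{i,j})·e_i + (1/A_{i',j})·e_{i'}` for `i' ∈ I⁺_j(A)\{i}`, and
`e_{i'}` for `i' ∈ N_j(A)`. -/
def projMatrix {ι : Type} [DecidableEq ι] {n : ℕ} (A : Matrix ι (Fin n) ℚ)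
    (j : Fin n) (i : ι) :
    Matrix {i' : ι // i' ≠ i} ι ℚ :=
  Matrix.of fun i' =>
    if A i'.1 j < 0 then (A i j)⁻¹ • unitRow i - (A i'.1 j)⁻¹ • unitRow i'.1
    else if 0 < A i'.1 j then (A i'.1 j)⁻¹ • unitRow i'.1 - (A i j)⁻¹ • unitRow i
    else unitRow i'.1

/-- The projection matrix of the degenerate restricted projection `fmpproj(·,·,j,⊥)`:
one row `e_{i'}` for each `i' ∈ N_j(A)`. -/
def degMatrix {ι : Type} [DecidableEq ι] {n : ℕ} (A : Matrix ι (Fin n) ℚ) (j : Fin n) :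
    Matrix {i' : ι // A i' j = 0} ι ℚ :=
  Matrix.of fun i' => unitRow i'.1

/-- A system of linear constraints `A x ≤ b` with an arbitrary finite row index type. -/
structure LinSys (n : ℕ) where
  ι : Type
  fin : Fintype ι
  dec : DecidableEq ι
  A : Matrix ι (Fin n) ℚ
  b : ι → ℚ

attribute [instance] LinSys.fin LinSys.dec

/-- `Step j S T F` holds iff the system `T` is a restricted projection of the system `S`
with respect to the variable `x_j`, with projection matrix `F` (either `fmpproj` w.r.t.
some designated row `i ∈ I⁻_j ∪ I⁺_j` when both index sets are nonempty, or the
degenerate restricted projection `fmpproj(·,·,j,⊥)` otherwise). -/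
inductive Step {n : ℕ} (j : Fin n) : (S T : LinSys n) → ∀ (_F : Matrix T.ι S.ι ℚ), Prop
  | designated (S : LinSys n) (i : S.ι)
      (hl : ∃ ℓ, S.A ℓ j < 0) (hu : ∃ u, 0 < S.A u j)
      (hi : S.A i j < 0 ∨ 0 < S.A i j) :
      Step j S
        ⟨{i' : S.ι // i' ≠ i}, inferInstance, inferInstance,
          projMatrix S.A j i * S.A, (projMatrix S.A j i).mulVec S.b⟩
        (projMatrix S.A j i)
  | degenerate (S : LinSys n)
      (h : (¬ ∃ ℓ, S.A ℓ j < 0) ∨ (¬ ∃ u, 0 < S.A u j)) :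
      Step j S
        ⟨{i' : S.ι // S.A i' j = 0}, inferInstance, inferInstance,
          degMatrix S.A j * S.A, (degMatrix S.A j).mulVec S.b⟩
        (degMatrix S.A j)

/-- `Chain S0 k S F` holds iff `S` is obtained from `S0` by `k` successive restricted
projections, eliminating the variables `x_1, …, x_k` in this order, and
`F = F^(k) ⋯ F^(1)` is the product of the corresponding projection matrices. -/
inductive Chain {n : ℕ} (S0 : LinSys n) : ℕ → (S : LinSys n) → ∀ (_F : Matrix S.ι S0.ι ℚ), Prop
  | zero : Chain S0 0 S0 1
  | succ {k : ℕ} {S T : LinSys n} {G : Matrix S.ι S0.ι ℚ} {F : Matrix T.ι S.ι ℚ}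
      (hc : Chain S0 k S G) (hk : k < n) (hs : Step ⟨k, hk⟩ S T F) :
      Chain S0 (k + 1) T (F * G)


lemma pivot_linearIndependent {ι κ : Type} [Fintype ι] (M : Matrix ι κ ℚ) (c : ι → κ)
    (h1 : ∀ r, M r (c r) ≠ 0) (h2 : ∀ r r', r ≠ r' → M r' (c r) = 0) :
    LinearIndependent ℚ (fun i => M i) := by
  rw [Fintype.linearIndependent_iff]
  intro g hg r
  have h := congrFun hg (c r)
  simp only [Finset.sum_apply, Pi.smul_apply, smul_eq_mul, Pi.zero_apply] at h
  rw [Finset.sum_eq_single r] at h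
  · exact (mul_eq_zero.mp h).resolve_right (h1 r)
  · intro r' _ hne
    rw [h2 r r' (Ne.symm hne), mul_zero]
  · intro h'; exact absurd (Finset.mem_univ r) h'

lemma step_linearIndependent {n : ℕ} {j : Fin n} {S T : LinSys n} {F : Matrix T.ι S.ι ℚ}
    (hs : Step j S T F) : LinearIndependent ℚ (fun i => F i) := by
  cases hs with
  | designated i hl hu hi =>
      apply pivot_linearIndependent _ (fun r => r.1)
      · intro r
        simp only [projMatrix, Matrix.of_apply]
        split_ifs with h1 h2
        · simp [unitRow, r.2, h1.ne]
        · simp [unitRow, r.2, h2.ne']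
        · simp [unitRow]
      · intro r r' hne
        have hne1 : r.1 ≠ r'.1 := fun h => hne (Subtype.ext h)
        simp only [projMatrix, Matrix.of_apply]
        split_ifs with h1 h2
        · simp [unitRow, r.2, hne1]
        · simp [unitRow, r.2, hne1]
        · simp [unitRow, hne1]
  | degenerate h =>
      apply pivot_linearIndependent _ (fun r => r.1)
      · intro r; simp [degMatrix, unitRow]
      · intro r r' hne
        have hne1 : r.1 ≠ r'.1 := fun h => hne (Subtype.ext h)
        simp [degMatrix, unitRow, hne1]

lemma mul_rows_linearIndependent {ι κ μ : Type} [Fintype ι] [Fintype κ]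
    (F : Matrix ι κ ℚ) (G : Matrix κ μ ℚ)
    (hF : LinearIndependent ℚ (fun i => F i)) (hG : LinearIndependent ℚ (fun i => G i)) :
    LinearIndependent ℚ (fun i => (F * G) i) := by
  have hker : LinearMap.ker (Matrix.vecMulLinear G) = ⊥ := by
    rw [LinearMap.ker_eq_bot']
    intro v hv
    rw [Fintype.linearIndependent_iff] at hG
    funext x
    refine hG v ?_ x
    have h0 : Matrix.vecMul v G = 0 := by rw [← Matrix.vecMulLinear_apply]; exact hv
    funext y
    have := congrFun h0 y
    simpa [Matrix.vecMul, dotProduct, Finset.sum_apply] using this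
  have heq : (fun i => (F * G) i) = (Matrix.vecMulLinear G) ∘ (fun i => F i) := by
    funext i j
    simp [Matrix.mul_apply, Matrix.vecMul, dotProduct]
  rw [heq]
  exact hF.map' _ hker

lemma chain_linearIndependent {n : ℕ} (S0 : LinSys n) (k : ℕ) (S : LinSys n)
    (F : Matrix S.ι S0.ι ℚ) (hc : Chain S0 k S F) :
    LinearIndependent ℚ (fun i => F i) := by
  induction hc with
  | zero =>
      apply pivot_linearIndependent _ (fun r => r)
      · intro r; simp [Matrix.one_apply]
      · intro r r' hne; simp [Matrix.one_apply, Ne.symm hne]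
  | succ hc hk hs ih =>
      exact mul_rows_linearIndependent _ _ (step_linearIndependent hs) ih

/-- The product `F = F^(k) ⋯ F^(1)` of the projection matrices of a sequence of `k`
restricted projections, eliminating variables `x_1, …, x_k`, starting from
`A x ≤ b` with `A ∈ ℚ^{m×n}`, `b ∈ ℚ^m` and `1 ≤ k ≤ m`, has linearly independent rows. -/
theorem chain_proj_matrix_linearIndependent {m n : ℕ} (A : Matrix (Fin m) (Fin n) ℚ)
    (b : Fin m → ℚ) (k : ℕ) (hk1 : 1 ≤ k) (hkm : k ≤ m)
    (S : LinSys n) (F : Matrix S.ι (Fin m) ℚ)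
    (hc : Chain ⟨Fin m, inferInstance, inferInstance, A, b⟩ k S F) :
    LinearIndependent ℚ (fun i => F i) := by
  exact chain_linearIndependent _ k S _ hc
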